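/- arXiv:1612.00593 — 3 statements merged into one kernel-verified Lean document; each statement's English description precedes it below -/
import Mathlib

section
/- (Universal approximation, Theorem 1.) Let m ≥ 1 and n ≥ 1 be natural numbers, and let 𝒳 = {S : S is a finite subset of [0,1]^m with |S| = n}. Suppose f : 𝒳 → ℝ is continuous with respect to the Hausdorff distance d_H, i.e., for every ε > 0 there exists δ > 0 such that for all S, S' ∈ 𝒳, d_H(S, S') < δ implies |f(S) − f(S')| < ε. Then for every ε > 0 there exist a natural number K, a continuous function h : [0,1]^m → ℝ^K, and a continuous function γ : ℝ^K → ℝ, such that for every S ∈ 𝒳, |f(S) − γ(MAX_{x ∈ S} h(x))| < ε, where MAX_{x ∈ S} h(x) ∈ ℝ^K denotes the coordinatewise maximum, i.e., its j-th coordinate is max_{x ∈ S} h_j(x). -/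
/-- The closed unit cube `[0,1]^m` in `ℝ^m` (with the Euclidean metric). -/
def unitCube (m : ℕ) : Set (EuclideanSpace ℝ (Fin m)) :=
  {x | ∀ j, x j ∈ Set.Icc (0 : ℝ) 1}

/-- Coordinatewise maximum of `h` over a finite nonempty set `S`:
`(maxPool h S hS) j = max_{x ∈ S} h x j`. -/
def maxPool {m K : ℕ} (h : EuclideanSpace ℝ (Fin m) → Fin K → ℝ)
    (S : Finset (EuclideanSpace ℝ (Fin m))) (hS : S.Nonempty) : Fin K → ℝ :=
  fun j => S.sup' hS (fun x => h x j)

/- ### Auxiliary material -/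

/-- Tent (hat) function. -/
noncomputable def tent (u : ℝ) : ℝ := max 0 (1 - |u|)

lemma tent_nonneg (u : ℝ) : 0 ≤ tent u := le_max_left _ _

lemma tent_continuous : Continuous tent :=
  continuous_const.max (continuous_const.sub continuous_abs)

lemma tent_eq_zero {u : ℝ} (h : 1 ≤ |u|) : tent u = 0 :=
  max_eq_left (by linarith)

lemma abs_lt_one_of_tent_ne_zero {u : ℝ} (h : tent u ≠ 0) : |u| < 1 := by
  by_contra hc
  exact h (tent_eq_zero (not_lt.mp hc))

/-- The tents at integer points form a partition of unity. -/
lemma tent_sum (M : ℤ) (u : ℝ) (hu : |u| ≤ (M : ℝ) - 1) :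
    ∑ z ∈ Finset.Icc (-M) M, tent (u - (z : ℝ)) = 1 := by
  have hu1 : u ≤ (M : ℝ) - 1 := (abs_le.mp hu).2
  have hu2 : -((M : ℝ) - 1) ≤ u := (abs_le.mp hu).1
  set z0 : ℤ := ⌊u⌋ with hz0
  have hfl : (z0 : ℝ) ≤ u := Int.floor_le u
  have hfu : u < (z0 : ℝ) + 1 := Int.lt_floor_add_one u
  have hz0l : -M ≤ z0 := by
    have h' : ((-M : ℤ) : ℝ) ≤ u := by push_cast; linarith
    exact Int.le_floor.mpr h'
  have hz0u : z0 + 1 ≤ M := by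
    have h' : z0 ≤ ⌊(M : ℝ) - 1⌋ := Int.floor_le_floor hu1
    have h'' : ⌊(M : ℝ) - 1⌋ = M - 1 := by
      rw [show (M:ℝ) - 1 = ((M - 1 : ℤ) : ℝ) by push_cast; ring, Int.floor_intCast]
    omega
  have hsub : ({z0, z0 + 1} : Finset ℤ) ⊆ Finset.Icc (-M) M := by
    intro z hz
    simp only [Finset.mem_insert, Finset.mem_singleton] at hz
    rcases hz with rfl | rfl <;> simp only [Finset.mem_Icc] <;> omega
  rw [← Finset.sum_subset hsub]
  · rw [Finset.sum_pair (by omega : z0 ≠ z0 + 1)]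
    have hfr : Int.fract u = u - (z0 : ℝ) := rfl
    have hfr0 : 0 ≤ u - (z0 : ℝ) := by linarith
    have hfr1 : u - (z0 : ℝ) < 1 := by linarith
    have h1 : tent (u - (z0 : ℝ)) = 1 - (u - (z0:ℝ)) := by
      rw [tent, abs_of_nonneg hfr0]
      exact max_eq_right (by linarith)
    have h2 : tent (u - ((z0 + 1 : ℤ) : ℝ)) = u - (z0:ℝ) := by
      have habs : |u - ((z0 + 1 : ℤ) : ℝ)| = 1 - (u - (z0:ℝ)) := by
        push_cast
        rw [abs_of_nonpos (by linarith)]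
        ring
      rw [tent, habs, show (1:ℝ) - (1 - (u - (z0:ℝ))) = u - (z0:ℝ) from by ring]
      exact max_eq_right hfr0
    rw [h1, h2]; ring
  · intro z hz hzn
    simp only [Finset.mem_insert, Finset.mem_singleton] at hzn
    push_neg at hzn
    apply tent_eq_zero
    have hz0lez : z0 ≤ z ∨ z ≤ z0 - 1 := by omega
    rcases lt_or_ge z z0 with hlt | hle
    · -- z ≤ z0 - 1, so u - z ≥ 1
      have : ((z : ℝ)) ≤ (z0 : ℝ) - 1 := by exact_mod_cast (by omega : z ≤ z0 - 1)
      rw [abs_of_nonneg (by linarith)]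
      linarith
    · -- z0 ≤ z, z ≠ z0, z ≠ z0+1 so z ≥ z0+2, u - z ≤ -1
      have hge : z0 + 2 ≤ z := by
        rcases hzn with ⟨h1', h2'⟩
        omega
      have : ((z0 : ℝ) + 2) ≤ (z : ℝ) := by exact_mod_cast hge
      rw [abs_of_nonpos (by linarith)]
      linarith

lemma norm_le_of_mem_unitCube {m : ℕ} {x : EuclideanSpace ℝ (Fin m)} (hx : x ∈ unitCube m) :
    ‖x‖ ≤ Real.sqrt m := by
  rw [EuclideanSpace.norm_eq]
  apply Real.sqrt_le_sqrt
  calc ∑ i, ‖x i‖ ^ 2 ≤ ∑ _i : Fin m, (1:ℝ) := by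
        apply Finset.sum_le_sum
        intro i _
        have h1 := (hx i).1
        have h2 := (hx i).2
        rw [Real.norm_eq_abs, ← one_pow 2]
        apply pow_le_pow_left₀ (abs_nonneg _)
        rw [abs_le]
        exact ⟨by linarith, h2⟩
      _ = m := by simp
      _ ≤ m := le_refl _

lemma unitCube_isCompact (m : ℕ) : IsCompact (unitCube m) := by
  apply Metric.isCompact_of_isClosed_isBounded
  · have h : unitCube m = ⋂ j, (fun x : EuclideanSpace ℝ (Fin m) => x j) ⁻¹' Set.Icc (0:ℝ) 1 := by
      ext x; simp [unitCube]
    rw [h]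
    exact isClosed_iInter fun j =>
      IsClosed.preimage (EuclideanSpace.proj (𝕜 := ℝ) j).continuous isClosed_Icc
  · rw [isBounded_iff_forall_norm_le]
    exact ⟨Real.sqrt m, fun x hx => norm_le_of_mem_unitCube hx⟩

/-- Key geometric estimate: if the max-pooled distance vectors of two finite subsets of the
cube are `η`-close and `g` is an `r`-net of the cube, then the Hausdorff distance of the two
sets is at most `2r + η`. -/
lemma infDist_aux {m K : ℕ} (g : Fin K → EuclideanSpace ℝ (Fin m)) (r η : ℝ)
    (net : ∀ x ∈ unitCube m, ∃ j, dist x (g j) ≤ r)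
    (S S' : Finset (EuclideanSpace ℝ (Fin m))) (hS : S.Nonempty) (hS' : S'.Nonempty)
    (hSc : ↑S ⊆ unitCube m)
    (hclose : ∀ j, |S.sup' hS (fun x => -dist x (g j)) - S'.sup' hS' (fun x => -dist x (g j))| ≤ η)
    {x : EuclideanSpace ℝ (Fin m)} (hx : x ∈ S) :
    Metric.infDist x (S' : Set (EuclideanSpace ℝ (Fin m))) ≤ 2 * r + η := by
  obtain ⟨j, hj⟩ := net x (hSc hx)
  obtain ⟨y, hy, hy2⟩ := S'.exists_mem_eq_sup' hS' (fun z => -dist z (g j))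
  have h1 : -dist x (g j) ≤ S.sup' hS (fun z => -dist z (g j)) :=
    Finset.le_sup' (fun z => -dist z (g j)) hx
  have h2 : S.sup' hS (fun z => -dist z (g j)) - S'.sup' hS' (fun z => -dist z (g j)) ≤ η :=
    (abs_le.mp (hclose j)).2
  have h3 : -dist y (g j) ≥ -dist x (g j) - η := by
    rw [← hy2]; linarith
  have h4 : dist y (g j) ≤ r + η := by
    have := hj; linarith
  have h5 : dist x y ≤ 2 * r + η :=
    (dist_triangle x (g j) y).trans (by rw [dist_comm (g j) y]; linarith)
  exact (Metric.infDist_le_dist_of_mem (by exact_mod_cast hy)).trans h5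

/-- **Universal approximation (Theorem 1).**  If `f` is a real-valued function on
the collection `𝒳` of `n`-point subsets of `[0,1]^m` which is continuous w.r.t.
the Hausdorff distance, then for every `ε > 0` there are `K`, a continuous
`h : [0,1]^m → ℝ^K` and a continuous `γ : ℝ^K → ℝ` such that
`|f S - γ (MAX_{x ∈ S} h x)| < ε` for every `S ∈ 𝒳`. -/
theorem universal_approximation
    (m n : ℕ) (hm : 1 ≤ m) (hn : 1 ≤ n)
    (f : Finset (EuclideanSpace ℝ (Fin m)) → ℝ)
    (hf : ∀ ε > 0, ∃ δ > 0,
      ∀ S S' : Finset (EuclideanSpace ℝ (Fin m)),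
        ↑S ⊆ unitCube m → S.card = n →
        ↑S' ⊆ unitCube m → S'.card = n →
        Metric.hausdorffDist (S : Set (EuclideanSpace ℝ (Fin m))) (S' : Set (EuclideanSpace ℝ (Fin m))) < δ → |f S - f S'| < ε) :
    ∀ ε > 0, ∃ (K : ℕ) (h : EuclideanSpace ℝ (Fin m) → Fin K → ℝ)
      (γ : (Fin K → ℝ) → ℝ),
      ContinuousOn h (unitCube m) ∧ Continuous γ ∧
      ∀ (S : Finset (EuclideanSpace ℝ (Fin m))) (hS : S.Nonempty),
        ↑S ⊆ unitCube m → S.card = n →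
        |f S - γ (maxPool h S hS)| < ε := by
  classical
  intro ε hε
  obtain ⟨δ, hδ, hfδ⟩ := hf (ε / 2) (by positivity)
  set r : ℝ := δ / 8 with hr
  have hrpos : 0 < r := by positivity
  -- finite r-net of the cube
  obtain ⟨t, ht⟩ := (unitCube_isCompact m).elim_finite_subcover
    (fun y : EuclideanSpace ℝ (Fin m) => Metric.ball y r) (fun y => Metric.isOpen_ball)
    (fun x _ => Set.mem_iUnion.mpr ⟨x, Metric.mem_ball_self hrpos⟩)
  set K := t.card with hK
  set g : Fin K → EuclideanSpace ℝ (Fin m) := fun i => (t.equivFin.symm i : EuclideanSpace ℝ (Fin m)) with hg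
  have net : ∀ x ∈ unitCube m, ∃ j : Fin K, dist x (g j) ≤ r := by
    intro x hx
    obtain ⟨y, hy, hxy⟩ := Set.mem_iUnion₂.mp (ht hx)
    refine ⟨t.equivFin ⟨y, hy⟩, ?_⟩
    have : g (t.equivFin ⟨y, hy⟩) = y := by simp [hg]
    rw [this]
    exact le_of_lt hxy
  -- the feature map
  set h : EuclideanSpace ℝ (Fin m) → Fin K → ℝ := fun x j => -dist x (g j) with hh
  -- uniform bound on |maxPool h S hS j|
  obtain ⟨B, hB⟩ := Finite.exists_le (fun j : Fin K => ‖g j‖)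
  set C : ℝ := Real.sqrt m + max B 0 with hC
  have hCpos : 0 ≤ C := by
    have := Real.sqrt_nonneg (m : ℝ)
    have := le_max_right B 0
    simp only [hC]; positivity
  have hbound : ∀ (S : Finset (EuclideanSpace ℝ (Fin m))) (hS : S.Nonempty), ↑S ⊆ unitCube m →
      ∀ j, |maxPool h S hS j| ≤ C := by
    intro S hS hSc j
    rw [abs_le]
    constructor
    · obtain ⟨x, hx⟩ := hS
      have hle : -C ≤ h x j := by
        simp only [hh, neg_le_neg_iff]
        calc dist x (g j) ≤ ‖x‖ + ‖g j‖ := dist_le_norm_add_norm x (g j)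
          _ ≤ Real.sqrt m + max B 0 := by
              have h1 := norm_le_of_mem_unitCube (hSc hx)
              have h2 := (hB j).trans (le_max_left B 0)
              linarith
      exact hle.trans (Finset.le_sup' (fun z => h z j) hx)
    · apply Finset.sup'_le
      intro x hx
      simp only [hh, maxPool]
      have := dist_nonneg (x := x) (y := g j)
      linarith
  set δ' : ℝ := δ / 8 with hδ'
  have hδ'pos : 0 < δ' := by positivity
  obtain ⟨M0, hM0⟩ := exists_nat_ge (C / δ' + 1)
  set M : ℤ := (M0 : ℤ) with hM
  have hMbig : C / δ' + 1 ≤ (M : ℝ) := by exact_mod_cast hM0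
  -- grid
  set W : Finset (Fin K → ℤ) := Fintype.piFinset fun _ => Finset.Icc (-M) M with hW
  -- property defining the coefficients
  set P : (Fin K → ℤ) → Prop := fun w => ∃ S : Finset (EuclideanSpace ℝ (Fin m)), ∃ hS : S.Nonempty,
      ↑S ⊆ unitCube m ∧ S.card = n ∧ ∀ j, |maxPool h S hS j / δ' - (w j : ℝ)| ≤ 1 with hP
  set c : (Fin K → ℤ) → ℝ := fun w => if hw : P w then f hw.choose else 0 with hc
  set γ : (Fin K → ℝ) → ℝ := fun v => ∑ w ∈ W, (∏ j, tent (v j / δ' - (w j : ℝ))) * c w with hγ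
  refine ⟨K, h, γ, ?_, ?_, ?_⟩
  · apply Continuous.continuousOn
    apply continuous_pi
    intro j
    exact (continuous_id.dist continuous_const).neg
  · apply continuous_finset_sum
    intro w _
    apply Continuous.mul _ continuous_const
    apply continuous_finset_prod
    intro j _
    exact tent_continuous.comp (by fun_prop)
  · intro S hS hSc hScard
    set u : Fin K → ℝ := fun j => maxPool h S hS j / δ' with hu
    have hub : ∀ j, |u j| ≤ (M : ℝ) - 1 := by
      intro j
      have h1 := hbound S hS hSc j
      rw [hu, abs_div, abs_of_pos hδ'pos]
      rw [div_le_iff₀ hδ'pos] at *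
      calc |maxPool h S hS j| ≤ C := h1
        _ ≤ ((M:ℝ) - 1) * δ' := by
            rw [← div_le_iff₀ hδ'pos] at *
            linarith
    set a : (Fin K → ℤ) → ℝ := fun w => ∏ j, tent (u j - (w j : ℝ)) with ha
    have hanonneg : ∀ w, 0 ≤ a w := fun w => Finset.prod_nonneg fun j _ => tent_nonneg _
    have hsumA : ∑ w ∈ W, a w = 1 := by
      have hps := Finset.prod_univ_sum (fun _ : Fin K => Finset.Icc (-M) M)
        (fun j z => tent (u j - (z : ℝ)))
      calc ∑ w ∈ W, a w = ∏ j, ∑ z ∈ Finset.Icc (-M) M, tent (u j - (z : ℝ)) := hps.symm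
        _ = 1 := Finset.prod_eq_one fun j _ => tent_sum M (u j) (hub j)
    -- each contributing coefficient is close to f S
    have hkey : ∀ w, a w ≠ 0 → |f S - c w| ≤ ε / 2 := by
      intro w hw
      have htents : ∀ j, |u j - (w j : ℝ)| < 1 := by
        intro j
        apply abs_lt_one_of_tent_ne_zero
        intro hz
        exact hw (Finset.prod_eq_zero (Finset.mem_univ j) hz)
      have hPw : P w := ⟨S, hS, hSc, hScard, fun j => (htents j).le⟩
      have hcw : c w = f hPw.choose := by rw [hc]; simp [hPw]
      obtain ⟨hS₂, hSc₂, hScard₂, hclose₂⟩ := hPw.choose_spec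
      set S₂ := hPw.choose
      -- maxPool vectors of S and S₂ are 2δ'-close
      have hclose : ∀ j, |S.sup' hS (fun x => -dist x (g j)) -
          S₂.sup' hS₂ (fun x => -dist x (g j))| ≤ 2 * δ' := by
        intro j
        have e1 : S.sup' hS (fun x => -dist x (g j)) = maxPool h S hS j := rfl
        have e2 : S₂.sup' hS₂ (fun x => -dist x (g j)) = maxPool h S₂ hS₂ j := rfl
        rw [e1, e2]
        have h1 := (htents j).le
        have h2 := hclose₂ j
        have := abs_sub (maxPool h S hS j / δ' - (w j : ℝ))
        have h3 : |maxPool h S hS j / δ' - maxPool h S₂ hS₂ j / δ'| ≤ 2 := by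
          calc |maxPool h S hS j / δ' - maxPool h S₂ hS₂ j / δ'|
              = |(maxPool h S hS j / δ' - (w j:ℝ)) - (maxPool h S₂ hS₂ j / δ' - (w j:ℝ))| := by
                ring_nf
            _ ≤ |maxPool h S hS j / δ' - (w j:ℝ)| + |maxPool h S₂ hS₂ j / δ' - (w j:ℝ)| :=
                abs_sub _ _
            _ ≤ 1 + 1 := add_le_add h1 h2
            _ = 2 := by norm_num
        have h4 : |maxPool h S hS j - maxPool h S₂ hS₂ j| / δ' ≤ 2 := by
          rw [← abs_of_pos hδ'pos, ← abs_div]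
          calc |(maxPool h S hS j - maxPool h S₂ hS₂ j) / δ'|
              = |maxPool h S hS j / δ' - maxPool h S₂ hS₂ j / δ'| := by rw [sub_div]
            _ ≤ 2 := h3
        rw [div_le_iff₀ hδ'pos] at h4
        linarith
      have hhaus : Metric.hausdorffDist (S : Set (EuclideanSpace ℝ (Fin m))) (S₂ : Set (EuclideanSpace ℝ (Fin m))) < δ := by
        have hle : Metric.hausdorffDist (S : Set (EuclideanSpace ℝ (Fin m))) (S₂ : Set (EuclideanSpace ℝ (Fin m))) ≤ 2 * r + 2 * δ' := by
          apply Metric.hausdorffDist_le_of_infDist (by positivity)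
          · intro x hx
            exact infDist_aux g r (2 * δ') net S S₂ hS hS₂ hSc hclose (by exact_mod_cast hx)
          · intro x hx
            refine infDist_aux g r (2 * δ') net S₂ S hS₂ hS hSc₂ ?_ (by exact_mod_cast hx)
            intro j
            rw [abs_sub_comm]
            exact hclose j
        calc Metric.hausdorffDist (S : Set (EuclideanSpace ℝ (Fin m))) (S₂ : Set (EuclideanSpace ℝ (Fin m))) ≤ 2 * r + 2 * δ' := hle
          _ < δ := by rw [hr, hδ']; linarith
      have := hfδ S S₂ hSc hScard hSc₂ hScard₂ hhaus
      rw [hcw]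
      linarith [le_of_lt this]
    -- conclude
    have hmp : ∀ j, maxPool h S hS j / δ' = u j := fun j => rfl
    have hγval : γ (maxPool h S hS) = ∑ w ∈ W, a w * c w := by
      rw [hγ]
    have hdiff : f S - γ (maxPool h S hS) = ∑ w ∈ W, a w * (f S - c w) := by
      rw [hγval]
      rw [Finset.sum_congr rfl (fun w _ => mul_sub (a w) (f S) (c w)),
        Finset.sum_sub_distrib, ← Finset.sum_mul, hsumA, one_mul]
    rw [hdiff]
    calc |∑ w ∈ W, a w * (f S - c w)| ≤ ∑ w ∈ W, |a w * (f S - c w)| :=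
          Finset.abs_sum_le_sum_abs _ _
      _ ≤ ∑ w ∈ W, a w * (ε / 2) := by
          apply Finset.sum_le_sum
          intro w _
          rw [abs_mul, abs_of_nonneg (hanonneg w)]
          by_cases hw : a w = 0
          · rw [hw]; simp
          · exact mul_le_mul_of_nonneg_left (hkey w hw) (hanonneg w)
      _ = ε / 2 := by rw [← Finset.sum_mul, hsumA, one_mul]
      _ < ε := by linarith
end

section
/- (Theorem 2(b), bottleneck bound.) Let m ≥ 1 and K ≥ 1 be natural numbers, let h : [0,1]^m → ℝ^K be any function, and define u(S) ∈ ℝ^K for a finite nonempty set S ⊆ [0,1]^m by u(S)_j = max_{x ∈ S} h_j(x). Then the sets C_S and N_S of Theorem 2(a) can be chosen so that additionally |C_S| ≤ K; that is, for every finite nonempty S ⊆ [0,1]^m there exist C_S ⊆ S with 1 ≤ |C_S| ≤ K and N_S ⊆ [0,1]^m with C_S ⊆ N_S such that u(T) = u(S) for every finite nonempty T with C_S ⊆ T ⊆ N_S. -/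
/-- **Theorem 2(b): bottleneck bound.**  The critical set `C_S` and noise set
`N_S` of Theorem 2(a) can be chosen so that moreover `1 ≤ |C_S| ≤ K`:
for every finite nonempty `S ⊆ [0,1]^m` there are `C_S ⊆ S` with
`1 ≤ |C_S| ≤ K` and `N_S ⊆ [0,1]^m` with `C_S ⊆ N_S` such that
`u(T) = u(S)` for every finite nonempty `T` with `C_S ⊆ T ⊆ N_S`. -/
theorem bottleneck_bound
    (m K : ℕ) (hm : 1 ≤ m) (hK : 1 ≤ K)
    (h : EuclideanSpace ℝ (Fin m) → Fin K → ℝ)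
    (S : Finset (EuclideanSpace ℝ (Fin m))) (hS : S.Nonempty)
    (hScube : ↑S ⊆ unitCube m) :
    ∃ (C : Finset (EuclideanSpace ℝ (Fin m))) (N : Set (EuclideanSpace ℝ (Fin m))),
      C ⊆ S ∧ 1 ≤ C.card ∧ C.card ≤ K ∧ N ⊆ unitCube m ∧ ↑C ⊆ N ∧
      ∀ (T : Finset (EuclideanSpace ℝ (Fin m))) (hT : T.Nonempty),
        C ⊆ T → ↑T ⊆ N →
        maxPool h T hT = maxPool h S hS := by
  -- for each coordinate j, pick a maximizer x j ∈ S
  have hx : ∀ j : Fin K, ∃ x ∈ S, S.sup' hS (fun y => h y j) = h x j := by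
    intro j
    obtain ⟨x, hxS, hxeq⟩ := S.exists_mem_eq_sup' hS (fun y => h y j)
    exact ⟨x, hxS, hxeq⟩
  choose x hxS hxeq using hx
  haveI : NeZero K := ⟨by omega⟩
  classical
  refine ⟨Finset.image x Finset.univ,
    {y | y ∈ unitCube m ∧ ∀ j, h y j ≤ maxPool h S hS j}, ?_, ?_, ?_, ?_, ?_, ?_⟩
  · intro y hy
    simp only [Finset.mem_image] at hy
    obtain ⟨j, _, rfl⟩ := hy
    exact hxS j
  · exact Finset.Nonempty.card_pos ⟨x 0, Finset.mem_image.mpr ⟨0, Finset.mem_univ _, rfl⟩⟩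
  · calc (Finset.image x Finset.univ).card ≤ Finset.univ.card :=
        Finset.card_image_le
      _ = K := by simp
  · exact fun y hy => hy.1
  · intro y hy
    simp only [Finset.coe_image, Set.mem_image] at hy
    obtain ⟨j, _, rfl⟩ := hy
    refine ⟨hScube (hxS j), fun k => ?_⟩
    exact Finset.le_sup' (fun z => h z k) (hxS j)
  · intro T hT hCT hTN
    funext j
    apply le_antisymm
    · apply Finset.sup'_le
      intro y hy
      exact (hTN hy).2 j
    · rw [maxPool, hxeq j]
      exact Finset.le_sup' (fun z => h z j) (hCT (Finset.mem_image.mpr ⟨j, Finset.mem_univ _, rfl⟩))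
end

section
/- (Voxel-occupancy determination of continuous set functions, intermediate step in Theorem 1.) Let m ≥ 1 and n ≥ 1, let 𝒳 = {S : S is a finite subset of [0,1]^m with |S| = n}, and let f : 𝒳 → ℝ be continuous with respect to Hausdorff distance (for every ε > 0 there exists δ > 0 such that d_H(S, S') < δ implies |f(S) − f(S')| < ε for all S, S' ∈ 𝒳). Then for every ε > 0 there exists a natural number k ≥ 1 such that whenever S, S' ∈ 𝒳 intersect exactly the same voxels of the grid of spacing 1/k (i.e., for every i ∈ {0,1,…,k−1}^m, S ∩ V_i ≠ ∅ iff S' ∩ V_i ≠ ∅, where V_i = ∏_{j=1}^m [i_j/k, (i_j+1)/k]), one has |f(S) − f(S')| < ε. -/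
/-- The closed voxel `V_i = ∏_j [i_j/k, (i_j+1)/k]` of side `1/k` indexed by
`i ∈ {0,…,k-1}^m`. -/
def voxel (m k : ℕ) (i : Fin m → Fin k) : Set (EuclideanSpace ℝ (Fin m)) :=
  {x | ∀ j, x j ∈ Set.Icc ((i j : ℝ) / k) (((i j : ℝ) + 1) / k)}

/-- Every point of the unit cube lies in some voxel of the grid of spacing `1/k`. -/
lemma exists_voxel_mem (m k : ℕ) (hk : 1 ≤ k) {x : EuclideanSpace ℝ (Fin m)}
    (hx : x ∈ unitCube m) : ∃ i : Fin m → Fin k, x ∈ voxel m k i := by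
  have hk0 : (0:ℝ) < k := by exact_mod_cast hk
  refine ⟨fun j => ⟨min (⌊x j * k⌋₊) (k-1), ?_⟩, ?_⟩
  · have : k - 1 < k := by omega
    exact lt_of_le_of_lt (min_le_right _ _) this
  · intro j
    have h0 : 0 ≤ x j := (hx j).1
    have h1 : x j ≤ 1 := (hx j).2
    have ht0 : 0 ≤ x j * k := by positivity
    have htk : x j * k ≤ k := by nlinarith
    constructor
    · rw [div_le_iff₀ hk0]
      calc ((min (⌊x j * k⌋₊) (k-1) : ℕ) : ℝ) ≤ (⌊x j * k⌋₊ : ℝ) := by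
            exact_mod_cast Nat.cast_le.mpr (min_le_left _ _)
        _ ≤ x j * k := Nat.floor_le ht0
    · rw [le_div_iff₀ hk0]
      simp only [Fin.val_mk]
      rcases le_or_gt (⌊x j * k⌋₊) (k-1) with h | h
      · rw [min_eq_left h]
        exact le_of_lt (Nat.lt_floor_add_one _)
      · rw [min_eq_right (le_of_lt h)]
        have : ((k:ℝ)) ≤ ((k-1:ℕ):ℝ) + 1 := by
          push_cast [Nat.cast_sub hk]
          ring_nf; linarith
        linarith

/-- Two points in a common voxel of spacing `1/k` are at distance at most `√m / k`. -/
lemma voxel_dist_le (m k : ℕ) (hk : 1 ≤ k) (i : Fin m → Fin k)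
    {x y : EuclideanSpace ℝ (Fin m)} (hx : x ∈ voxel m k i) (hy : y ∈ voxel m k i) :
    dist x y ≤ Real.sqrt m / k := by
  have hk0 : (0:ℝ) < k := by exact_mod_cast hk
  rw [EuclideanSpace.dist_eq]
  have hsum : ∑ j, dist (x j) (y j) ^ 2 ≤ (m : ℝ) / k ^ 2 := by
    have : ∀ j, dist (x j) (y j) ^ 2 ≤ (1 / k) ^ 2 := by
      intro j
      have h1 := (hx j).1; have h2 := (hx j).2
      have h3 := (hy j).1; have h4 := (hy j).2
      have hd : dist (x j) (y j) ≤ 1 / k := by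
        rw [Real.dist_eq, abs_le]
        rw [le_div_iff₀ hk0] at h2 h4
        rw [div_le_iff₀ hk0] at h1 h3
        have hone : (1:ℝ)/k * k = 1 := by field_simp
        constructor <;> nlinarith [h1, h2, h3, h4, hone, hk0]
      exact pow_le_pow_left₀ dist_nonneg hd 2
    calc ∑ j, dist (x j) (y j) ^ 2 ≤ ∑ _j : Fin m, (1 / (k:ℝ)) ^ 2 :=
          Finset.sum_le_sum (fun j _ => this j)
      _ = (m : ℝ) / k ^ 2 := by simp [Finset.sum_const]; ring
  calc Real.sqrt (∑ j, dist (x j) (y j) ^ 2) ≤ Real.sqrt ((m:ℝ) / k ^ 2) :=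
        Real.sqrt_le_sqrt hsum
    _ = Real.sqrt m / k := by
        rw [Real.sqrt_div (by positivity), Real.sqrt_sq hk0.le]

/-- **Voxel-occupancy determination of continuous set functions.**  If
`f : 𝒳 → ℝ` is continuous w.r.t. the Hausdorff distance on the collection `𝒳`
of `n`-point subsets of `[0,1]^m`, then for every `ε > 0` there is `k ≥ 1` such
that whenever `S, S' ∈ 𝒳` intersect exactly the same voxels of the grid of
spacing `1/k`, one has `|f S - f S'| < ε`. -/
theorem voxel_occupancy_determines
    (m n : ℕ) (hm : 1 ≤ m) (hn : 1 ≤ n)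
    (f : Finset (EuclideanSpace ℝ (Fin m)) → ℝ)
    (hf : ∀ ε > 0, ∃ δ > 0,
      ∀ S S' : Finset (EuclideanSpace ℝ (Fin m)),
        ↑S ⊆ unitCube m → S.card = n →
        ↑S' ⊆ unitCube m → S'.card = n →
        Metric.hausdorffDist (S : Set (EuclideanSpace ℝ (Fin m)))
          (S' : Set (EuclideanSpace ℝ (Fin m))) < δ → |f S - f S'| < ε) :
    ∀ ε > 0, ∃ k : ℕ, 1 ≤ k ∧
      ∀ S S' : Finset (EuclideanSpace ℝ (Fin m)),
        ↑S ⊆ unitCube m → S.card = n →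
        ↑S' ⊆ unitCube m → S'.card = n →
        (∀ i : Fin m → Fin k,
          ((S : Set (EuclideanSpace ℝ (Fin m))) ∩ voxel m k i).Nonempty ↔
          ((S' : Set (EuclideanSpace ℝ (Fin m))) ∩ voxel m k i).Nonempty) →
        |f S - f S'| < ε := by
  intro ε hε
  obtain ⟨δ, hδ, hδf⟩ := hf ε hε
  set k : ℕ := ⌈Real.sqrt m / δ⌉₊ + 1 with hkdef
  have hk1 : 1 ≤ k := by omega
  have hk0 : (0:ℝ) < k := by exact_mod_cast hk1
  have hkδ : Real.sqrt m / k < δ := by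
    rw [div_lt_iff₀ hk0]
    have h1 : Real.sqrt m / δ < k := by
      calc Real.sqrt m / δ ≤ (⌈Real.sqrt m / δ⌉₊ : ℝ) := Nat.le_ceil _
        _ < k := by exact_mod_cast Nat.lt_succ_self _
    rw [div_lt_iff₀ hδ] at h1
    linarith
  refine ⟨k, hk1, fun S S' hS hScard hS' hS'card hvox => ?_⟩
  apply hδf S S' hS hScard hS' hS'card
  have hbd : Metric.hausdorffDist (S : Set (EuclideanSpace ℝ (Fin m)))
      (S' : Set (EuclideanSpace ℝ (Fin m))) ≤ Real.sqrt m / k := by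
    apply Metric.hausdorffDist_le_of_mem_dist (by positivity)
    · intro x hx
      obtain ⟨i, hxi⟩ := exists_voxel_mem m k hk1 (hS hx)
      obtain ⟨y, hy, hyi⟩ := (hvox i).mp ⟨x, hx, hxi⟩
      exact ⟨y, hy, voxel_dist_le m k hk1 i hxi hyi⟩
    · intro y hy
      obtain ⟨i, hyi⟩ := exists_voxel_mem m k hk1 (hS' hy)
      obtain ⟨x, hx, hxi⟩ := (hvox i).mpr ⟨y, hy, hyi⟩
      exact ⟨x, hx, voxel_dist_le m k hk1 i hyi hxi⟩
  linarith
end
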